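/- arXiv:1209.5088 — 4 statements merged into one kernel-verified Lean document; each statement's English description precedes it below -/
import Mathlib

section
/- Let 0<q<1 and let f be a real function on ℝ_q^+ = {q^n : n ∈ ℤ} such that f(q^n) → 0 as n → ∞ (i.e. f vanishes at 0 along ℝ_q^+). Then the number of sign changes of the q-derivative D_q f on ℝ_q^+ is at least the number of sign changes of f on ℝ_q^+. -/
open Real Filter

noncomputable section

/-- The q-lattice `{q^n : n ∈ ℤ}`. -/
def qLat (q : ℝ) : Set ℝ := {x | ∃ n : ℤ, x = q ^ n}

/-- Jackson q-integral over (0,∞). -/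
def qInt (q : ℝ) (f : ℝ → ℝ) : ℝ := (1 - q) * ∑' n : ℤ, q ^ n * f (q ^ n)

/-- The q-derivative. -/
def qDeriv (q : ℝ) (f : ℝ → ℝ) (x : ℝ) : ℝ := (f x - f (q * x)) / ((1 - q) * x)

/-- Finite q-Pochhammer symbol `(a;p)_n`. -/
def qPoch (a p : ℝ) (n : ℕ) : ℝ := ∏ i ∈ Finset.range n, (1 - a * p ^ i)

/-- Infinite q-Pochhammer symbol `(a;p)_∞`. -/
def qPochInf (a p : ℝ) : ℝ := ∏' i : ℕ, (1 - a * p ^ i)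

/-- Normalized Hahn–Exton q-Bessel function `j_ν(x,q²)`. -/
def jBessel (q ν x : ℝ) : ℝ :=
  ∑' n : ℕ, (-1 : ℝ) ^ n * q ^ (n * (n + 1)) * x ^ (2 * n) /
    (qPoch (q ^ (2 * ν + 2)) (q ^ 2) n * qPoch (q ^ 2) (q ^ 2) n)

/-- Modified q-Bessel function `I_ν(x) = j_ν(ix,q²)`. -/
def iBessel (q ν x : ℝ) : ℝ :=
  ∑' n : ℕ, q ^ (n * (n + 1)) * x ^ (2 * n) /
    (qPoch (q ^ (2 * ν + 2)) (q ^ 2) n * qPoch (q ^ 2) (q ^ 2) n)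

/-- The q-Bessel operator `Δ_{q,ν}`. -/
def qBesselOp (q ν : ℝ) (f : ℝ → ℝ) (x : ℝ) : ℝ :=
  (f (x / q) - (1 + q ^ (2 * ν)) * f x + q ^ (2 * ν) * f (q * x)) / x ^ 2

/-- The constant `c_{q,ν}`. -/
def cqnu (q ν : ℝ) : ℝ :=
  (1 / (1 - q)) * qPochInf (q ^ (2 * ν + 2)) (q ^ 2) / qPochInf (q ^ 2) (q ^ 2)

/-- The q-Bessel Fourier transform `F_{q,ν}`. -/
def qFourier (q ν : ℝ) (f : ℝ → ℝ) (x : ℝ) : ℝ :=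
  cqnu q ν * qInt q (fun t => f t * jBessel q ν (x * t) * t ^ (2 * ν + 1))

/-- The q-Bessel translation operator `T_{q,x}^ν`. -/
def qTrans (q ν : ℝ) (f : ℝ → ℝ) (x y : ℝ) : ℝ :=
  cqnu q ν * qInt q (fun t =>
    qFourier q ν f t * jBessel q ν (y * t) * jBessel q ν (x * t) * t ^ (2 * ν + 1))

/-- The q-convolution product `f *_q g`. -/
def qConv (q ν : ℝ) (f g : ℝ → ℝ) (x : ℝ) : ℝ :=
  cqnu q ν * qInt q (fun y => qTrans q ν f x y * g y * y ^ (2 * ν + 1))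

/-- The q-Macdonald function `K_ν`. -/
def qMacdonald (q ν x : ℝ) : ℝ :=
  cqnu q ν * qInt q (fun t => (1 + t ^ 2)⁻¹ * jBessel q ν (t * x) * t ^ (2 * ν + 1))

/-- The elementary kernel `g_a`. -/
def gKer (q ν a x : ℝ) : ℝ :=
  cqnu q ν * qInt q (fun t => (1 + t ^ 2 / a ^ 2)⁻¹ * jBessel q ν (t * x) * t ^ (2 * ν + 1))

/-- `f` has at least `n` changes of sign on the q-lattice. -/
def HasSignChanges (q : ℝ) (f : ℝ → ℝ) (n : ℕ) : Prop :=
  ∃ t : Fin (n + 1) → ℝ, (∀ i, t i ∈ qLat q) ∧ StrictMono t ∧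
    ∀ i : Fin n, f (t i.castSucc) * f (t i.succ) < 0

/-- `f` is bounded on the q-lattice and has limits at `0` and at `∞` along the lattice. -/
def Admissible (q : ℝ) (f : ℝ → ℝ) : Prop :=
  (∃ M : ℝ, ∀ x ∈ qLat q, |f x| ≤ M) ∧
  (∃ L : ℝ, Tendsto (fun n : ℕ => f (q ^ (n : ℤ))) atTop (nhds L)) ∧
  (∃ L : ℝ, Tendsto (fun n : ℕ => f (q ^ (-n : ℤ))) atTop (nhds L))

/-- `K` is a variation diminishing `*_q`-kernel. -/
def IsVDKernel (q ν : ℝ) (K : ℝ → ℝ) : Prop :=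
  Summable (fun n : ℤ => q ^ n * |K (q ^ n)| * ((q : ℝ) ^ n) ^ (2 * ν + 1)) ∧
  ∀ f : ℝ → ℝ, Admissible q f →
    ∀ m : ℕ, HasSignChanges q (qConv q ν K f) m → HasSignChanges q f m

/-- The q-Wronskian `W_x(u,v)`. -/
def qWronskian (q : ℝ) (u v : ℝ → ℝ) (x : ℝ) : ℝ :=
  (1 / q ^ 2) * (1 - q) ^ 2 * (qDeriv q u (x / q) * v x - qDeriv q v (x / q) * u x)



private lemma tele_sum (q : ℝ) (f : ℝ → ℝ) (b : ℤ) (n : ℕ) :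
    ∑ k ∈ Finset.range n, (f (q ^ (b + k)) - f (q ^ (b + k + 1)))
      = f (q ^ b) - f (q ^ (b + n)) := by
  have h := Finset.sum_range_sub' (fun k : ℕ => f (q ^ (b + (k : ℤ)))) n
  simp only [Nat.cast_zero, add_zero, Nat.cast_add, Nat.cast_one, add_assoc] at h ⊢
  exact h

private lemma interior_step (q : ℝ) (f : ℝ → ℝ) (a b : ℤ) (hba : b < a)
    (hsign : f (q ^ a) * f (q ^ b) < 0) :
    ∃ j : ℤ, b ≤ j ∧ j < a ∧ 0 < f (q ^ b) * (f (q ^ j) - f (q ^ (j + 1))) := by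
  by_contra h
  push_neg at h
  obtain ⟨n, rfl⟩ : ∃ n : ℕ, a = b + n := ⟨(a - b).toNat, by omega⟩
  have hsum : f (q ^ b) * (f (q ^ b) - f (q ^ (b + (n : ℤ)))) ≤ 0 := by
    rw [← tele_sum, Finset.mul_sum]
    apply Finset.sum_nonpos
    intro k hk
    simp only [Finset.mem_range] at hk
    exact h (b + k) (by omega) (by omega)
  nlinarith [mul_self_nonneg (f (q ^ b))]

private lemma zero_step (q : ℝ) (f : ℝ → ℝ)
    (h0 : Filter.Tendsto (fun n : ℕ => f (q ^ (n : ℤ))) Filter.atTop (nhds 0))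
    (a : ℤ) (hfa : f (q ^ a) ≠ 0) :
    ∃ j : ℤ, a ≤ j ∧ 0 < f (q ^ a) * (f (q ^ j) - f (q ^ (j + 1))) := by
  by_contra h
  push_neg at h
  have key : ∀ n : ℕ, f (q ^ a) * (f (q ^ a) - f (q ^ (a + (n : ℤ)))) ≤ 0 := by
    intro n
    rw [← tele_sum, Finset.mul_sum]
    apply Finset.sum_nonpos
    intro k _
    exact h (a + k) (by omega)
  have htn : Filter.Tendsto (fun n : ℕ => (a + (n : ℤ)).toNat) Filter.atTop Filter.atTop := by
    apply Filter.tendsto_atTop_atTop.mpr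
    intro b
    exact ⟨b + a.natAbs, fun n hn => by omega⟩
  have hlim0 : Filter.Tendsto (fun n : ℕ => f (q ^ (a + (n : ℤ)))) Filter.atTop (nhds 0) := by
    have hc := h0.comp htn
    apply hc.congr'
    filter_upwards [Filter.eventually_ge_atTop a.natAbs] with n hn
    simp only [Function.comp_apply]
    congr 2
    omega
  have hlim : Filter.Tendsto (fun n : ℕ => f (q ^ a) * (f (q ^ a) - f (q ^ (a + (n : ℤ)))))
      Filter.atTop (nhds (f (q ^ a) * (f (q ^ a) - 0))) :=
    (tendsto_const_nhds.sub hlim0).const_mul _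
  have hle : f (q ^ a) * (f (q ^ a) - 0) ≤ 0 :=
    le_of_tendsto hlim (Filter.Eventually.of_forall key)
  rw [sub_zero] at hle
  exact hfa (mul_self_eq_zero.mp (le_antisymm hle (mul_self_nonneg _)))

private lemma qDeriv_pos_mul (q : ℝ) (hq0 : 0 < q) (hq1 : q < 1) (f : ℝ → ℝ) (c : ℝ) (j : ℤ)
    (h : 0 < c * (f (q ^ j) - f (q ^ (j + 1)))) :
    0 < c * qDeriv q f (q ^ j) := by
  have hx : (0:ℝ) < (1 - q) * q ^ j := mul_pos (by linarith) (zpow_pos hq0 j)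
  have hq : q * q ^ j = q ^ (j + 1) := by
    rw [zpow_add_one₀ (ne_of_gt hq0)]; ring
  unfold qDeriv
  rw [hq, ← mul_div_assoc]
  exact div_pos h hx

theorem sign_changes_qDeriv_of_vanishing_at_zero (q : ℝ) (hq0 : 0 < q) (hq1 : q < 1)
    (f : ℝ → ℝ) (h0 : Tendsto (fun n : ℕ => f (q ^ (n : ℤ))) atTop (nhds 0)) :
    ∀ n : ℕ, HasSignChanges q f n → HasSignChanges q (qDeriv q f) n := by
  intro n hsc
  obtain ⟨t, htlat, htmono, htprod⟩ := hsc
  -- exponents of the t i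
  have hm : ∀ i, ∃ m : ℤ, t i = q ^ m := fun i => htlat i
  choose m hm using hm
  cases n with
  | zero =>
      exact ⟨t, htlat, htmono, fun i => i.elim0⟩
  | succ k =>
      -- f is nonzero at each t i
      have hfne : ∀ i : Fin (k + 2), f (t i) ≠ 0 := by
        intro i
        rcases eq_or_ne i (Fin.last (k + 1)) with rfl | hne
        · have := htprod (Fin.last k)
          intro h
          rw [show (Fin.last k).succ = Fin.last (k+1) from rfl, h, mul_zero] at this
          exact lt_irrefl 0 this
        · obtain ⟨j, rfl⟩ := Fin.exists_castSucc_eq.mpr hne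
          have := htprod j
          intro h
          rw [h, zero_mul] at this
          exact lt_irrefl 0 this
      -- exponent order from strict monotonicity
      have hmlt : ∀ j : Fin (k + 1), m j.succ < m j.castSucc := by
        intro j
        have := htmono (Fin.castSucc_lt_succ : j.castSucc < j.succ)
        rw [hm j.castSucc, hm j.succ] at this
        exact (zpow_lt_zpow_iff_right_of_lt_one₀ hq0 hq1).mp this
      -- choose good lattice points for the derivative
      have hexists : ∀ i : Fin (k + 2), ∃ e : ℤ, m i ≤ e ∧
          (∀ j : Fin (k + 1), i = j.succ → e < m j.castSucc) ∧
          0 < f (t i) * qDeriv q f (q ^ e) := by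
        intro i
        rcases Fin.eq_zero_or_eq_succ i with rfl | ⟨j, rfl⟩
        · obtain ⟨e, he1, he2⟩ := zero_step q f h0 (m 0) (by rw [← hm 0]; exact hfne 0)
          refine ⟨e, he1, fun j hj => absurd hj.symm (Fin.succ_ne_zero j), ?_⟩
          rw [hm 0]
          exact qDeriv_pos_mul q hq0 hq1 f _ e he2
        · have hsign : f (q ^ m j.castSucc) * f (q ^ m j.succ) < 0 := by
            rw [← hm j.castSucc, ← hm j.succ]; exact htprod j
          obtain ⟨e, he1, he2, he3⟩ := interior_step q f (m j.castSucc) (m j.succ) (hmlt j) hsign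
          refine ⟨e, he1, fun j' hj' => ?_, ?_⟩
          · exact Fin.succ_inj.mp hj' ▸ he2
          · rw [hm j.succ]
            exact qDeriv_pos_mul q hq0 hq1 f _ e he3
      choose e he1 he2 he3 using hexists
      refine ⟨fun i => q ^ e i, fun i => ⟨e i, rfl⟩, ?_, ?_⟩
      · rw [Fin.strictMono_iff_lt_succ]
        intro j
        have h1 : e j.succ < m j.castSucc := he2 j.succ j rfl
        have h2 : m j.castSucc ≤ e j.castSucc := he1 j.castSucc
        exact zpow_lt_zpow_right_of_lt_one₀ hq0 hq1 (by omega)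
      · intro j
        have hA := he3 j.castSucc
        have hB := he3 j.succ
        have hC := htprod j
        by_contra hcon
        push_neg at hcon
        nlinarith [mul_pos hA hB]

end
end

section
/- Let 0<q<1 and let f be a real function on ℝ_q^+ such that f(q^{-n}) → 0 as n → ∞ (i.e. f vanishes at infinity along ℝ_q^+). Then V[D_q f] ≥ V[f], where V denotes the number of sign changes on ℝ_q^+. -/
open Real Filter

noncomputable section

private lemma qd_term_eq (q : ℝ) (hq0 : 0 < q) (hq1 : q < 1) (f : ℝ → ℝ) (k : ℤ) :
    (1 - q) * q ^ k * qDeriv q f (q ^ k) = f (q ^ k) - f (q ^ (k + 1)) := by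
  have hqne : q ≠ 0 := ne_of_gt hq0
  have h1 : q * q ^ k = q ^ (k + 1) := by
    rw [zpow_add_one₀ hqne]; ring
  have hc : (0:ℝ) < (1 - q) * q ^ k := mul_pos (by linarith) (zpow_pos hq0 k)
  rw [qDeriv, h1, mul_div_cancel₀ _ (ne_of_gt hc)]

private lemma qd_tele (q : ℝ) (hq0 : 0 < q) (hq1 : q < 1) (f : ℝ → ℝ) (a : ℤ) (d : ℕ) :
    ∑ k ∈ Finset.Ico a (a + d), (1 - q) * q ^ k * qDeriv q f (q ^ k)
      = f (q ^ a) - f (q ^ (a + d)) := by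
  induction d with
  | zero => simp
  | succ d ih =>
      have hle : a ≤ a + d := by omega
      have h : a + (d + 1 : ℕ) = (a + d) + 1 := by push_cast; ring
      have hins : Finset.Ico a (a + d + 1) = insert (a + d) (Finset.Ico a (a + d)) := by
        ext x; simp only [Finset.mem_Ico, Finset.mem_insert]; omega
      rw [h, hins, Finset.sum_insert (by simp), ih, qd_term_eq q hq0 hq1]
      ring

private lemma qd_pick (q s : ℝ) (hq0 : 0 < q) (hq1 : q < 1) (f : ℝ → ℝ) (a b : ℤ)
    (h : 0 < (∑ k ∈ Finset.Ico a b, (1 - q) * q ^ k * qDeriv q f (q ^ k)) * s) :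
    ∃ k : ℤ, a ≤ k ∧ k < b ∧ 0 < qDeriv q f (q ^ k) * s := by
  by_contra hc
  push_neg at hc
  have hnp : (∑ k ∈ Finset.Ico a b, (1 - q) * q ^ k * qDeriv q f (q ^ k)) * s ≤ 0 := by
    rw [Finset.sum_mul]
    apply Finset.sum_nonpos
    intro k hk
    rw [Finset.mem_Ico] at hk
    have := hc k hk.1 hk.2
    have hpos : (0:ℝ) < (1 - q) * q ^ k := mul_pos (by linarith) (zpow_pos hq0 k)
    nlinarith
  linarith

theorem sign_changes_qDeriv_of_vanishing_at_infinity (q : ℝ) (hq0 : 0 < q) (hq1 : q < 1)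
    (f : ℝ → ℝ) (hinf : Tendsto (fun n : ℕ => f (q ^ (-n : ℤ))) atTop (nhds 0)) :
    ∀ n : ℕ, HasSignChanges q f n → HasSignChanges q (qDeriv q f) n := by
  intro n hn
  obtain ⟨t, htlat, htmono, hsgn⟩ := hn
  cases n with
  | zero =>
      refine ⟨fun _ => q ^ (0:ℤ), fun _ => ⟨0, rfl⟩, ?_, fun i => i.elim0⟩
      intro a b hab
      exact absurd (Fin.lt_def.mp hab) (by omega)
  | succ p =>
      choose m hm using fun i => htlat i
      have hmanti : ∀ i : Fin (p + 1), m i.succ < m i.castSucc := by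
        intro i
        have h := htmono (Fin.castSucc_lt_succ : i.castSucc < i.succ)
        rw [hm, hm] at h
        exact (zpow_lt_zpow_iff_right_of_lt_one₀ hq0 hq1).mp h
      have hpick : ∀ i : Fin (p + 1), ∃ k : ℤ, m i.succ ≤ k ∧ k < m i.castSucc ∧
          0 < qDeriv q f (q ^ k) * f (t i.succ) := by
        intro i
        have hab : m i.succ < m i.castSucc := hmanti i
        have hd : m i.succ + ((m i.castSucc - m i.succ).toNat : ℤ) = m i.castSucc := by omega
        have hsum := qd_tele q hq0 hq1 f (m i.succ) (m i.castSucc - m i.succ).toNat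
        rw [hd] at hsum
        refine qd_pick q _ hq0 hq1 f _ _ ?_
        rw [hsum, ← hm i.succ, ← hm i.castSucc]
        nlinarith [hsgn i, sq_nonneg (f (t i.succ))]
      choose k hk1 hk2 hk3 using hpick
      have hlsucc : (Fin.last p).succ = Fin.last (p + 1) := Fin.succ_last p
      have hlastne : f (t (Fin.last (p + 1))) ≠ 0 := by
        have h := hsgn (Fin.last p)
        rw [hlsucc] at h
        intro h0; rw [h0] at h; simp at h
      have habs : (0:ℝ) < |f (t (Fin.last (p + 1)))| := abs_pos.mpr hlastne
      obtain ⟨N0, hN0⟩ := Metric.tendsto_atTop.mp hinf _ habs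
      set N := max N0 ((m (Fin.last (p + 1))).natAbs + 1) with hN
      have hN1 : |f (q ^ (-(N:ℕ) : ℤ))| < |f (t (Fin.last (p + 1)))| := by
        have := hN0 N (le_max_left _ _)
        simpa [Real.dist_eq] using this
      have hNlt : -((N:ℕ) : ℤ) < m (Fin.last (p + 1)) := by
        have h1 : ((m (Fin.last (p + 1))).natAbs + 1 : ℕ) ≤ N := le_max_right _ _
        omega
      have hex : ∃ kl : ℤ, -((N:ℕ) : ℤ) ≤ kl ∧ kl < m (Fin.last (p + 1)) ∧
          0 < qDeriv q f (q ^ kl) * (-(f (t (Fin.last (p + 1))))) := by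
        have hd : -((N:ℕ) : ℤ) + ((m (Fin.last (p + 1)) + N).toNat : ℤ)
            = m (Fin.last (p + 1)) := by omega
        have hsum := qd_tele q hq0 hq1 f (-((N:ℕ) : ℤ)) (m (Fin.last (p + 1)) + N).toNat
        rw [hd] at hsum
        refine qd_pick q _ hq0 hq1 f _ _ ?_
        rw [hsum, ← hm (Fin.last (p + 1))]
        have h2 := le_abs_self (f (q ^ (-(N:ℕ) : ℤ)) * f (t (Fin.last (p + 1))))
        rw [abs_mul] at h2
        nlinarith [mul_lt_mul_of_pos_right hN1 habs, abs_mul_abs_self (f (t (Fin.last (p + 1))))]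
      obtain ⟨kl, hkl1, hkl2, hkl3⟩ := hex
      set K : Fin (p + 2) → ℤ :=
        fun j => if h : (j : ℕ) < p + 1 then k ⟨(j : ℕ), h⟩ else kl with hK
      have hF1 : ∀ i : Fin (p + 1), K i.castSucc = k i := by
        intro i
        have hlt : ((i.castSucc : Fin (p + 2)) : ℕ) < p + 1 := by
          simp [Fin.coe_castSucc]
          have := i.isLt; omega
        rw [hK]; simp only
        rw [dif_pos hlt]
        congr 1
      have hF2 : ∀ j : Fin (p + 2), K j < m j := by
        intro j
        by_cases h : (j : ℕ) < p + 1
        · have hcs : ((⟨(j : ℕ), h⟩ : Fin (p + 1)).castSucc : Fin (p + 2)) = j :=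
            Fin.ext rfl
          have h3 := hk2 ⟨(j : ℕ), h⟩
          rw [hcs] at h3
          rw [hK]; simp only
          rw [dif_pos h]
          exact h3
        · have hj : j = Fin.last (p + 1) := by
            have h2 := j.isLt
            exact Fin.ext (by simp only [Fin.val_last]; omega)
          rw [hK]; simp only
          rw [dif_neg h, hj]
          exact hkl2
      have hF3 : ∀ i : Fin (p + 1), K i.succ < K i.castSucc := by
        intro i
        have h1 : K i.succ < m i.succ := hF2 i.succ
        have h2 : m i.succ ≤ k i := hk1 i
        rw [hF1 i]
        omega
      refine ⟨fun j => q ^ K j, fun j => ⟨K j, rfl⟩, ?_, ?_⟩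
      · apply Fin.strictMono_iff_lt_succ.mpr
        intro i
        exact (zpow_lt_zpow_iff_right_of_lt_one₀ hq0 hq1).mpr (hF3 i)
      · intro i
        show qDeriv q f (q ^ K i.castSucc) * qDeriv q f (q ^ K i.succ) < 0
        have hA : 0 < qDeriv q f (q ^ K i.castSucc) * f (t i.succ) := by
          rw [hF1 i]; exact hk3 i
        by_cases h : (i : ℕ) + 1 < p + 1
        · set i' : Fin (p + 1) := ⟨(i : ℕ) + 1, h⟩ with hi'
          have hKs : K i.succ = k i' := by
            rw [hK]; simp only [Fin.val_succ]
            rw [dif_pos h]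
          have hB : 0 < qDeriv q f (q ^ K i.succ) * f (t i'.succ) := by
            rw [hKs]; exact hk3 i'
          have hcs : (i'.castSucc : Fin (p + 2)) = i.succ := Fin.ext rfl
          have hC : f (t i.succ) * f (t i'.succ) < 0 := by
            have := hsgn i'
            rw [hcs] at this
            exact this
          nlinarith [hA, hB, hC]
        · have hj : i.succ = Fin.last (p + 1) := by
            apply Fin.ext
            have := i.isLt
            simp only [Fin.val_succ, Fin.val_last]
            omega
          have hKs : K i.succ = kl := by
            rw [hK]; simp only [Fin.val_succ]
            rw [dif_neg h]
          have hB : 0 < qDeriv q f (q ^ K i.succ) * (-(f (t (Fin.last (p + 1))))) := by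
            rw [hKs]; exact hkl3
          rw [hj] at hA
          nlinarith [mul_pos hA hB, sq_nonneg (f (t (Fin.last (p + 1))))]


end
end

section
/- Let 0<q<1 and let h be a real function on ℝ_q^+ and Ω a strictly positive function on ℝ_q^+ such that Ω(x)h(x) → 0 as x → 0⁺ along ℝ_q^+ (or as x → ∞ along ℝ_q^+). Then V[D_q(Ω h)] ≥ V[h]. -/
open Real Filter

noncomputable section

private lemma stepA_aux (G : ℤ → ℝ) (k m : ℤ) (hkm : k < m) (hG : G m < G k) :
    ∃ j, k ≤ j ∧ j < m ∧ G (j + 1) < G j := by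
  by_contra hc
  push_neg at hc
  have mono : ∀ d : ℕ, k + (d : ℤ) ≤ m → G k ≤ G (k + (d : ℤ)) := by
    intro d
    induction d with
    | zero => intro _; simp
    | succ p ih =>
      intro hle
      have hcast : ((p + 1 : ℕ) : ℤ) = (p : ℤ) + 1 := by push_cast; ring
      rw [hcast] at hle ⊢
      have h1 : k + (p : ℤ) < m := by omega
      have h2 := hc (k + (p : ℤ)) (by omega) h1
      have h3 := ih (by omega)
      have : k + (p : ℤ) + 1 = k + ((p : ℤ) + 1) := by ring
      rw [← this]
      linarith
  obtain ⟨d, hd⟩ : ∃ d : ℕ, m = k + (d : ℤ) := ⟨(m - k).toNat, by omega⟩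
  have := mono d (by omega)
  rw [← hd] at this
  linarith

private lemma stepAbs_aux (G : ℤ → ℝ) (k m : ℤ) (hkm : k < m) (habs : |G m| < |G k|) :
    ∃ j, k ≤ j ∧ j < m ∧ 0 < (G j - G (j + 1)) * G k := by
  rcases lt_trichotomy (G k) 0 with hk | hk | hk
  · have : G k < G m := by
      have h1 : -(G m) ≤ |G m| := neg_le_abs _
      have h2 : |G k| = -(G k) := abs_of_neg hk
      linarith
    obtain ⟨j, hj1, hj2, hj3⟩ := stepA_aux (fun j => -G j) k m hkm (by simpa using neg_lt_neg this)
    exact ⟨j, hj1, hj2, by nlinarith⟩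
  · rw [hk, abs_zero] at habs; exact ((abs_nonneg _).not_gt habs).elim
  · have : G m < G k := by
      have h1 : G m ≤ |G m| := le_abs_self _
      have h2 : |G k| = G k := abs_of_pos hk
      linarith
    obtain ⟨j, hj1, hj2, hj3⟩ := stepA_aux G k m hkm this
    exact ⟨j, hj1, hj2, by nlinarith⟩

private lemma stepSign_aux (G : ℤ → ℝ) (k m : ℤ) (hkm : k < m) (hs : G m * G k < 0) :
    ∃ j, k ≤ j ∧ j < m ∧ 0 < (G j - G (j + 1)) * G k := by
  rcases lt_trichotomy (G k) 0 with hk | hk | hk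
  · have hm : 0 < G m := by nlinarith
    obtain ⟨j, hj1, hj2, hj3⟩ := stepA_aux (fun j => -G j) k m hkm (by simp; nlinarith)
    exact ⟨j, hj1, hj2, by nlinarith⟩
  · rw [hk, mul_zero] at hs; linarith
  · have hm : G m < 0 := by nlinarith
    obtain ⟨j, hj1, hj2, hj3⟩ := stepA_aux G k m hkm (by linarith)
    exact ⟨j, hj1, hj2, by nlinarith⟩

private lemma stepAbs'_aux (G : ℤ → ℝ) (k m : ℤ) (hkm : k < m) (habs : |G k| < |G m|) :
    ∃ j, k ≤ j ∧ j < m ∧ (G j - G (j + 1)) * G m < 0 := by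
  rcases lt_trichotomy (G m) 0 with hm | hm | hm
  · have : G m < G k := by
      have h1 : -(G k) ≤ |G k| := neg_le_abs _
      have h2 : |G m| = -(G m) := abs_of_neg hm
      linarith
    obtain ⟨j, hj1, hj2, hj3⟩ := stepA_aux G k m hkm this
    exact ⟨j, hj1, hj2, by nlinarith⟩
  · rw [hm, abs_zero] at habs; exact ((abs_nonneg _).not_gt habs).elim
  · have : G k < G m := by
      have h1 : G k ≤ |G k| := le_abs_self _
      have h2 : |G m| = G m := abs_of_pos hm
      linarith
    obtain ⟨j, hj1, hj2, hj3⟩ := stepA_aux (fun j => -G j) k m hkm (by simpa using neg_lt_neg this)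
    exact ⟨j, hj1, hj2, by nlinarith⟩

private lemma signs_aux {a b x y : ℝ} (h1 : 0 < a * x) (h2 : 0 < b * y) (h3 : x * y < 0) :
    a * b < 0 := by nlinarith [mul_pos h1 h2]

private lemma signs_aux' {a b x : ℝ} (h1 : 0 < a * x) (h2 : b * x < 0) : a * b < 0 := by
  nlinarith [mul_pos h1 (neg_pos.mpr h2), sq_nonneg x]


theorem sign_changes_qDeriv_weighted (q : ℝ) (hq0 : 0 < q) (hq1 : q < 1)
    (h Ω : ℝ → ℝ) (hΩ : ∀ x ∈ qLat q, 0 < Ω x)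
    (hlim : Tendsto (fun n : ℕ => Ω (q ^ (n : ℤ)) * h (q ^ (n : ℤ))) atTop (nhds 0) ∨
            Tendsto (fun n : ℕ => Ω (q ^ (-n : ℤ)) * h (q ^ (-n : ℤ))) atTop (nhds 0)) :
    ∀ n : ℕ, HasSignChanges q h n → HasSignChanges q (qDeriv q (fun x => Ω x * h x)) n := by
  intro n hn
  obtain ⟨t, htl, htm, hts⟩ := hn
  have hq0' : (q : ℝ) ≠ 0 := ne_of_gt hq0
  have h1q : (0:ℝ) < 1 - q := by linarith
  have hanti : StrictAnti (fun j : ℤ => (q : ℝ) ^ j) := zpow_right_strictAnti₀ hq0 hq1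
  match n with
  | 0 =>
    refine ⟨fun _ => (1 : ℝ), fun _ => ⟨0, by simp⟩, ?_, fun i => i.elim0⟩
    intro i j hij
    have hi := i.isLt; have hj := j.isLt
    exact absurd (Fin.lt_def.mp hij) (by omega)
  | (m + 1) =>
    choose e he using htl
    set G : ℤ → ℝ := fun j => Ω (q ^ j) * h (q ^ j) with hG
    have he_anti : ∀ i j : Fin (m + 2), i < j → e j < e i := by
      intro i j hij
      have h1 := htm hij
      rw [he i, he j] at h1
      exact hanti.lt_iff_gt.mp h1
    have hFs : ∀ i : Fin (m + 1), G (e i.castSucc) * G (e i.succ) < 0 := by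
      intro i
      have h1 := hts i
      have o1 := hΩ (t i.castSucc) ⟨e i.castSucc, he i.castSucc⟩
      have o2 := hΩ (t i.succ) ⟨e i.succ, he i.succ⟩
      have e1 : G (e i.castSucc) = Ω (t i.castSucc) * h (t i.castSucc) := by
        rw [hG]; simp only [← he]
      have e2 : G (e i.succ) = Ω (t i.succ) * h (t i.succ) := by
        rw [hG]; simp only [← he]
      rw [e1, e2]
      have : Ω (t i.castSucc) * h (t i.castSucc) * (Ω (t i.succ) * h (t i.succ))
          = (Ω (t i.castSucc) * Ω (t i.succ)) * (h (t i.castSucc) * h (t i.succ)) := by ring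
      rw [this]
      exact mul_neg_of_pos_of_neg (mul_pos o1 o2) h1
    have hkey : ∀ c : ℤ, qDeriv q (fun x => Ω x * h x) (q ^ c)
        = (G c - G (c + 1)) / ((1 - q) * q ^ c) := by
      intro c
      have hm : q * q ^ c = q ^ (c + 1) := by
        rw [zpow_add_one₀ hq0' c, mul_comm]
      simp only [qDeriv, hG, hm]
    have hD : ∀ a b : ℤ, (G a - G (a + 1)) * (G b - G (b + 1)) < 0 →
        qDeriv q (fun x => Ω x * h x) (q ^ a) * qDeriv q (fun x => Ω x * h x) (q ^ b) < 0 := by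
      intro a b hab
      rw [hkey a, hkey b, div_mul_div_comm]
      exact div_neg_of_neg_of_pos hab
        (mul_pos (mul_pos h1q (zpow_pos hq0 a)) (mul_pos h1q (zpow_pos hq0 b)))
    have hu : ∀ i : Fin (m + 1), ∃ j, e i.succ ≤ j ∧ j < e i.castSucc ∧
        0 < (G j - G (j + 1)) * G (e i.succ) := by
      intro i
      refine stepSign_aux G _ _ (he_anti _ _ Fin.castSucc_lt_succ) ?_
      have := hFs i; nlinarith
    choose u hu1 hu2 hu3 using hu
    rcases hlim with h0 | h0
    · -- limit at 0 : prepend a point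
      have hG0ne : G (e (0 : Fin (m + 2))) ≠ 0 := by
        intro hz
        have h1 := hFs 0
        rw [Fin.castSucc_zero] at h1
        rw [hz] at h1
        simp at h1
      have h0' : Tendsto (fun n : ℕ => G ((n : ℤ))) atTop (nhds 0) := h0
      obtain ⟨N0, hN0⟩ := Metric.tendsto_atTop.mp h0' |G (e (0 : Fin (m + 2)))|
        (abs_pos.mpr hG0ne)
      set N : ℕ := max N0 (e (0 : Fin (m + 2)) + 1).toNat with hN
      have hNe : e (0 : Fin (m + 2)) < (N : ℤ) := by
        have h1 := Int.self_le_toNat (e (0 : Fin (m + 2)) + 1)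
        have h2 : (e (0 : Fin (m + 2)) + 1).toNat ≤ N := le_max_right _ _
        have h3 : (((e (0 : Fin (m + 2)) + 1).toNat : ℕ) : ℤ) ≤ (N : ℤ) := by exact_mod_cast h2
        omega
      have habs : |G ((N : ℤ))| < |G (e (0 : Fin (m + 2)))| := by
        have := hN0 N (le_max_left _ _)
        rwa [Real.dist_eq, sub_zero] at this
      obtain ⟨jM, hj1, hj2, hj3⟩ := stepAbs_aux G (e (0 : Fin (m + 2))) (N : ℤ) hNe habs
      set v : Fin (m + 2) → ℤ := Fin.cons jM u with hv
      have hva : StrictAnti v := by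
        rw [Fin.strictAnti_iff_succ_lt]
        intro i
        induction i using Fin.cases with
        | zero =>
          have e1 : v (0 : Fin (m + 1)).succ = u 0 := Fin.cons_succ _ _ _
          have e2 : v (0 : Fin (m + 1)).castSucc = jM := by
            rw [Fin.castSucc_zero]; exact Fin.cons_zero _ _
          rw [e1, e2]
          have h4 := hu2 0
          rw [Fin.castSucc_zero] at h4
          omega
        | succ i =>
          have e1 : v (i.succ).succ = u i.succ := Fin.cons_succ _ _ _
          have e2 : v (i.succ).castSucc = u i.castSucc := by
            rw [← Fin.succ_castSucc]; exact Fin.cons_succ _ _ _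
          rw [e1, e2]
          have h4 := hu2 i.succ
          have h5 := hu1 i.castSucc
          rw [← Fin.succ_castSucc] at h4
          omega
      refine ⟨fun i => q ^ v i, fun i => ⟨v i, rfl⟩, ?_, ?_⟩
      · intro a b hab
        exact hanti (hva hab)
      · intro i
        apply hD
        induction i using Fin.cases with
        | zero =>
          have e1 : v (0 : Fin (m + 1)).succ = u 0 := Fin.cons_succ _ _ _
          have e2 : v (0 : Fin (m + 1)).castSucc = jM := by
            rw [Fin.castSucc_zero]; exact Fin.cons_zero _ _
          rw [e1, e2]
          have h4 := hu3 0
          have h5 := hFs 0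
          rw [Fin.castSucc_zero] at h5
          exact signs_aux hj3 h4 (by nlinarith)
        | succ i =>
          have e1 : v (i.succ).succ = u i.succ := Fin.cons_succ _ _ _
          have e2 : v (i.succ).castSucc = u i.castSucc := by
            rw [← Fin.succ_castSucc]; exact Fin.cons_succ _ _ _
          rw [e1, e2]
          have h4 := hu3 i.castSucc
          have h5 := hu3 i.succ
          have h6 := hFs i.succ
          rw [← Fin.succ_castSucc] at h6
          exact signs_aux h4 h5 h6
    · -- limit at ∞ : append a point
      have hGLne : G (e (Fin.last (m + 1))) ≠ 0 := by
        intro hz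
        have h1 := hFs (Fin.last m)
        rw [Fin.succ_last] at h1
        rw [hz] at h1
        simp at h1
      have h0' : Tendsto (fun n : ℕ => G (-(n : ℤ))) atTop (nhds 0) := h0
      obtain ⟨N0, hN0⟩ := Metric.tendsto_atTop.mp h0' |G (e (Fin.last (m + 1)))|
        (abs_pos.mpr hGLne)
      set N : ℕ := max N0 (1 - e (Fin.last (m + 1))).toNat with hN
      have hNe : -(N : ℤ) < e (Fin.last (m + 1)) := by
        have h1 := Int.self_le_toNat (1 - e (Fin.last (m + 1)))
        have h2 : (1 - e (Fin.last (m + 1))).toNat ≤ N := le_max_right _ _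
        have h3 : (((1 - e (Fin.last (m + 1))).toNat : ℕ) : ℤ) ≤ (N : ℤ) := by exact_mod_cast h2
        omega
      have habs : |G (-(N : ℤ))| < |G (e (Fin.last (m + 1)))| := by
        have := hN0 N (le_max_left _ _)
        rwa [Real.dist_eq, sub_zero] at this
      obtain ⟨jP, hj1, hj2, hj3⟩ := stepAbs'_aux G (-(N : ℤ)) (e (Fin.last (m + 1))) hNe habs
      set v : Fin (m + 2) → ℤ := Fin.snoc u jP with hv
      have hva : StrictAnti v := by
        rw [Fin.strictAnti_iff_succ_lt]
        intro i
        induction i using Fin.lastCases with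
        | last =>
          have e1 : v (Fin.last m).succ = jP := by
            rw [Fin.succ_last]; exact Fin.snoc_last _ _
          have e2 : v (Fin.last m).castSucc = u (Fin.last m) := Fin.snoc_castSucc _ _ _
          rw [e1, e2]
          have h4 := hu1 (Fin.last m)
          rw [Fin.succ_last] at h4
          have h4' : e (Fin.last (m + 1)) ≤ u (Fin.last m) := h4
          omega
        | cast i =>
          have e1 : v i.castSucc.succ = u i.succ := by
            rw [Fin.succ_castSucc]; exact Fin.snoc_castSucc _ _ _
          have e2 : v i.castSucc.castSucc = u i.castSucc := Fin.snoc_castSucc _ _ _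
          rw [e1, e2]
          have h4 := hu2 i.succ
          have h5 := hu1 i.castSucc
          rw [← Fin.succ_castSucc] at h4
          omega
      refine ⟨fun i => q ^ v i, fun i => ⟨v i, rfl⟩, ?_, ?_⟩
      · intro a b hab
        exact hanti (hva hab)
      · intro i
        apply hD
        induction i using Fin.lastCases with
        | last =>
          have e1 : v (Fin.last m).succ = jP := by
            rw [Fin.succ_last]; exact Fin.snoc_last _ _
          have e2 : v (Fin.last m).castSucc = u (Fin.last m) := Fin.snoc_castSucc _ _ _
          rw [e1, e2]
          have h4 := hu3 (Fin.last m)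
          rw [Fin.succ_last] at h4
          exact signs_aux' h4 hj3
        | cast i =>
          have e1 : v i.castSucc.succ = u i.succ := by
            rw [Fin.succ_castSucc]; exact Fin.snoc_castSucc _ _ _
          have e2 : v i.castSucc.castSucc = u i.castSucc := Fin.snoc_castSucc _ _ _
          rw [e1, e2]
          have h4 := hu3 i.castSucc
          have h5 := hu3 i.succ
          have h6 := hFs i.succ
          rw [← Fin.succ_castSucc] at h6
          exact signs_aux h4 h5 h6


end
end

section
/- For 0<q<1 and ν>-1, Δ_{q,ν}^n applied to the monomial t^{2n} and evaluated consistently gives Δ_{q,ν}^n[t ↦ t^{2n}] = ϱ_n (a constant function), where ϱ_n = ∏_{i=1}^n [q^{-2i} - (1+q^{2ν}) + q^{2ν+2i}]; more precisely Δ_{q,ν}[t ↦ t^{2k}](t) = [q^{-2k} - (1+q^{2ν}) + q^{2ν+2k}] t^{2k-2} for each k ≥ 1, and iterating n times starting from t^{2n} yields the constant ϱ_n. -/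
open Real Filter

noncomputable section

lemma qBesselOp_congr_iter (q ν : ℝ) (hq0 : 0 < q) :
    ∀ (n : ℕ) (f g : ℝ → ℝ), (∀ s : ℝ, s ≠ 0 → f s = g s) →
      ∀ t : ℝ, t ≠ 0 → (qBesselOp q ν)^[n] f t = (qBesselOp q ν)^[n] g t := by
  intro n
  induction n with
  | zero => intro f g h t ht; exact h t ht
  | succ n ih =>
    intro f g h t ht
    rw [Function.iterate_succ_apply, Function.iterate_succ_apply]
    refine ih _ _ ?_ t ht
    intro s hs
    have hq : q ≠ 0 := ne_of_gt hq0
    unfold qBesselOp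
    rw [h s hs, h (s / q) (div_ne_zero hs hq), h (q * s) (mul_ne_zero hq hs)]

lemma qBesselOp_smul (q ν c : ℝ) (f : ℝ → ℝ) :
    qBesselOp q ν (fun s => c * f s) = fun t => c * qBesselOp q ν f t := by
  funext t
  unfold qBesselOp
  ring

lemma qBesselOp_smul_iter (q ν c : ℝ) :
    ∀ (n : ℕ) (f : ℝ → ℝ) (t : ℝ),
      (qBesselOp q ν)^[n] (fun s => c * f s) t = c * (qBesselOp q ν)^[n] f t := by
  intro n
  induction n with
  | zero => intro f t; simp
  | succ n ih =>
    intro f t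
    rw [Function.iterate_succ_apply, Function.iterate_succ_apply,
      qBesselOp_smul q ν c f]
    exact ih _ t

lemma qBesselOp_mono (q ν : ℝ) (hq0 : 0 < q) (k : ℕ) (hk : 1 ≤ k) (t : ℝ) (ht : t ≠ 0) :
    qBesselOp q ν (fun s => s ^ (2 * k)) t =
      (((q : ℝ) ^ (2 * k))⁻¹ - (1 + q ^ (2 * ν)) + q ^ (2 * ν) * q ^ (2 * k)) *
        t ^ (2 * k - 2) := by
  have hq : q ≠ 0 := ne_of_gt hq0
  have h2 : 2 ≤ 2 * k := by omega
  have ht2 : t ^ (2 * k) = t ^ (2 * k - 2) * t ^ 2 := by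
    rw [← pow_add]; congr 1; omega
  unfold qBesselOp
  simp only
  rw [div_pow, mul_pow, div_eq_iff (pow_ne_zero 2 ht), ht2]
  field_simp

theorem qBesselOp_monomial (q ν : ℝ) (hq0 : 0 < q) (hq1 : q < 1) (hν : -1 < ν) (n : ℕ) :
    (∀ k : ℕ, 1 ≤ k → ∀ t : ℝ, t ≠ 0 →
      qBesselOp q ν (fun s => s ^ (2 * k)) t =
        (((q : ℝ) ^ (2 * k))⁻¹ - (1 + q ^ (2 * ν)) + q ^ (2 * ν) * q ^ (2 * k)) *
          t ^ (2 * k - 2)) ∧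
    (∀ t : ℝ, t ≠ 0 →
      (qBesselOp q ν)^[n] (fun s => s ^ (2 * n)) t =
        ∏ i ∈ Finset.Icc 1 n,
          (((q : ℝ) ^ (2 * i))⁻¹ - (1 + q ^ (2 * ν)) + q ^ (2 * ν) * q ^ (2 * i))) := by
  constructor
  · intro k hk t ht
    exact qBesselOp_mono q ν hq0 k hk t ht
  · induction n with
    | zero => intro t ht; simp
    | succ n ih =>
      intro t ht
      rw [Function.iterate_succ_apply]
      have hcongr : ∀ s : ℝ, s ≠ 0 →
          qBesselOp q ν (fun s => s ^ (2 * (n + 1))) s =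
          (fun s => (((q : ℝ) ^ (2 * (n + 1)))⁻¹ - (1 + q ^ (2 * ν)) +
            q ^ (2 * ν) * q ^ (2 * (n + 1))) * s ^ (2 * n)) s := by
        intro s hs
        have := qBesselOp_mono q ν hq0 (n + 1) (by omega) s hs
        simpa [show 2 * (n + 1) - 2 = 2 * n by omega] using this
      rw [qBesselOp_congr_iter q ν hq0 n _ _ hcongr t ht,
        qBesselOp_smul_iter, ih t ht,
        Finset.prod_Icc_succ_top (by omega : 1 ≤ n + 1)]
      ring

end
end
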